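/- Let X be a real random variable such that G_X(0, β) < ∞ for all β in some open interval containing 1. Then the function β ↦ G_X(0, β) is differentiable at β = 1 and its derivative there equals −𝒞ℛℰ(X), i.e. 𝒞ℛℰ(X) = −(∂/∂β) G_X(0, β)|_{β=1}. -/

import Mathlib

open MeasureTheory ProbabilityTheory Set

/-- The (essential) support interval of a CDF `F`: the set where `0 < F x < 1`,
which coincides (up to endpoints) with the interval `(l, r)` where
`l = inf {x : F x > 0}` and `r = sup {x : 1 - F x > 0}`. -/
def cigfSupport (F : ℝ → ℝ) : Set ℝ := {x | 0 < F x ∧ F x < 1}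

/-- The cumulative information generating function
`G_X(α, β) = ∫_l^r F(x)^α (1 - F(x))^β dx`. -/
noncomputable def cigf (F : ℝ → ℝ) (α β : ℝ) : ℝ :=
  ∫ x in cigfSupport F, F x ^ α * (1 - F x) ^ β

/-- `(α, β) ∈ D_X`, i.e. `G_X(α, β) < ∞`. -/
def memD (F : ℝ → ℝ) (α β : ℝ) : Prop :=
  IntegrableOn (fun x => F x ^ α * (1 - F x) ^ β) (cigfSupport F)

/-- The CDF of a random variable `X` under the probability measure `P`. -/
noncomputable def rvCDF {Ω : Type*} [MeasurableSpace Ω] (P : Measure Ω) (X : Ω → ℝ) (x : ℝ) : ℝ :=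
  (P {ω | X ω ≤ x}).toReal

/-- The CDF of a probability measure on `ℝ`. -/
noncomputable def cdfOf (μ : Measure ℝ) (x : ℝ) : ℝ := (μ (Iic x)).toReal

/-- The cumulative residual entropy `𝒞ℛℰ(X) = -∫_l^r (1 - F x) log (1 - F x) dx`. -/
noncomputable def CRE (F : ℝ → ℝ) : ℝ :=
  -∫ x in cigfSupport F, (1 - F x) * Real.log (1 - F x)

/-- For `0 < y`, `0 < δ`, `-log y ≤ y^(-δ)/δ`. -/
lemma neg_log_le_rpow_div (y δ : ℝ) (hy : 0 < y) (hδ : 0 < δ) :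
    -Real.log y ≤ y ^ (-δ) / δ := by
  have h := Real.log_le_sub_one_of_pos (Real.rpow_pos_of_pos hy (-δ))
  rw [Real.log_rpow hy] at h
  rw [le_div_iff₀ hδ]
  nlinarith

/-- If `G_X(0, β) < ∞` for all `β` in an open interval containing `1`, then
`β ↦ G_X(0, β)` is differentiable at `β = 1` with derivative `-𝒞ℛℰ(X)`. -/
theorem stmt4 {Ω : Type*} [MeasurableSpace Ω] (P : Measure Ω) [IsProbabilityMeasure P]
    (X : Ω → ℝ) (hX : Measurable X)
    (a b : ℝ) (ha : a < 1) (hb : 1 < b)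
    (hfin : ∀ β ∈ Ioo a b, memD (rvCDF P X) 0 β) :
    HasDerivAt (fun β => cigf (rvCDF P X) 0 β) (-(CRE (rvCDF P X))) 1 := by
  set F := rvCDF P X with hFdef
  have hmono : Monotone F := by
    intro x y hxy
    exact ENNReal.toReal_mono (measure_ne_top _ _)
      (measure_mono fun ω h => le_trans h hxy)
  have hFmeas : Measurable F := hmono.measurable
  have hS : MeasurableSet (cigfSupport F) := by
    have : cigfSupport F = F ⁻¹' Ioo 0 1 := rfl
    rw [this]; exact hFmeas measurableSet_Ioo
  set μ := volume.restrict (cigfSupport F) with hμ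
  -- constants
  set cβ : ℝ := (a + 1) / 2 with hcβ
  set δ : ℝ := (1 - a) / 4 with hδdef
  have hδ : 0 < δ := by rw [hδdef]; linarith
  set c' : ℝ := (3 * a + 1) / 4 with hc'
  have hc'mem : c' ∈ Ioo a b := ⟨by rw [hc']; linarith, by rw [hc']; linarith⟩
  set r : ℝ := min ((1 - a) / 2) (b - 1) with hr
  have hrpos : 0 < r := lt_min (by linarith) (by linarith)
  -- measurability of integrands
  have hmeas1 : ∀ β : ℝ, AEStronglyMeasurable (fun x => (1 - F x) ^ β) μ := by
    intro β
    apply Measurable.aestronglyMeasurable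
    measurability
  have hint : ∀ β ∈ Ioo a b, Integrable (fun x => (1 - F x) ^ β) μ := by
    intro β hβ
    have h := hfin β hβ
    have h' : IntegrableOn (fun x => (1 - F x) ^ β) (cigfSupport F) := by simpa [memD, Real.rpow_zero] using h
    exact h'
  -- apply the dominated-derivative theorem
  have key := hasDerivAt_integral_of_dominated_loc_of_deriv_le (μ := μ)
    (F := fun β x => (1 - F x) ^ β)
    (F' := fun β x => (1 - F x) ^ β * Real.log (1 - F x))
    (bound := fun x => (1 / δ) * (1 - F x) ^ c')
    (x₀ := 1) (Metric.ball_mem_nhds 1 hrpos)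
    (Filter.Eventually.of_forall fun β => hmeas1 β)
    (hint 1 ⟨ha, hb⟩)
    (by apply Measurable.aestronglyMeasurable; measurability)
    ?_ ((hint c' hc'mem).const_mul _) ?_
  · have heq : (fun β => cigf F 0 β) = fun β => ∫ x in cigfSupport F, (1 - F x) ^ β := by
      funext β; simp [cigf, Real.rpow_zero]
    rw [heq]
    refine key.2.congr_deriv ?_
    symm
    rw [CRE, neg_neg]
    exact integral_congr_ae (Filter.Eventually.of_forall fun x => by
      simp [Real.rpow_one])
  · -- bound
    refine (ae_restrict_iff' hS).2 (Filter.Eventually.of_forall fun x hx => fun β hβ => ?_)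
    obtain ⟨hx0, hx1⟩ := hx
    set y := 1 - F x with hy
    have hy0 : 0 < y := by rw [hy]; linarith
    have hy1 : y ≤ 1 := by rw [hy]; linarith
    have hcβle : cβ ≤ β := by
      have : |β - 1| < r := by simpa [Real.dist_eq] using hβ
      have h1 : β - 1 > -((1 - a) / 2) := by
        have := abs_lt.1 this
        have := this.1
        have hrle : r ≤ (1 - a) / 2 := min_le_left _ _
        linarith
      rw [hcβ]; linarith
    have hlognp : Real.log y ≤ 0 := Real.log_nonpos hy0.le hy1
    have h1 : ‖(y : ℝ) ^ β * Real.log y‖ = y ^ β * (-Real.log y) := by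
      rw [Real.norm_eq_abs, abs_mul, abs_of_nonneg (Real.rpow_nonneg hy0.le β),
        abs_of_nonpos hlognp]
    rw [h1]
    have h2 : y ^ β ≤ y ^ cβ := Real.rpow_le_rpow_of_exponent_ge hy0 hy1 hcβle
    have h3 : -Real.log y ≤ y ^ (-δ) / δ := neg_log_le_rpow_div y δ hy0 hδ
    have h4 : y ^ β * (-Real.log y) ≤ y ^ cβ * (y ^ (-δ) / δ) := by
      apply mul_le_mul h2 h3 (by linarith) (Real.rpow_nonneg hy0.le _)
    calc y ^ β * (-Real.log y) ≤ y ^ cβ * (y ^ (-δ) / δ) := h4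
      _ = (1 / δ) * (y ^ cβ * y ^ (-δ)) := by ring
      _ = (1 / δ) * y ^ c' := by
          rw [← Real.rpow_add hy0]
          congr 1
          rw [hcβ, hδdef, hc']; ring
  · -- differentiability
    refine (ae_restrict_iff' hS).2 (Filter.Eventually.of_forall fun x hx => fun β _ => ?_)
    have hy0 : 0 < 1 - F x := by linarith [hx.2]
    exact (Real.hasStrictDerivAt_const_rpow hy0 β).hasDerivAt
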